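/- Suppose v is continuously differentiable on (0,1) with bounded derivative, w is continuously differentiable with k_w := inf_{x∈(0,1)} w'(x) > 0, and h(ρ) := r([w⁻¹(ρ),1], v) with fixed point ρ* = h(ρ*). Then there exists a constant C > 0 such that h(ρ*) − h(ρ) ≤ C (ρ − ρ*)² for all ρ ∈ [0,1]. -/

import Mathlib

open MeasureTheory Set

set_option maxHeartbeats 2000000 in
theorem stmt3 (w v w' v' : ℝ → ℝ) (kw : ℝ)
    (hw_cont : ContinuousOn w (Icc 0 1))
    (hw_mono : StrictMonoOn w (Icc 0 1))
    (hw_range : ∀ x ∈ Icc (0:ℝ) 1, w x ∈ Icc (0:ℝ) 1)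
    (hw_deriv : ∀ x ∈ Ioo (0:ℝ) 1, HasDerivAt w (w' x) x)
    (hw'_cont : ContinuousOn w' (Ioo 0 1))
    (hkw : 0 < kw) (hkw_le : ∀ x ∈ Ioo (0:ℝ) 1, kw ≤ w' x)
    (hv_int : IntegrableOn v (Icc 0 1))
    (hv_pos : ∀ x ∈ Icc (0:ℝ) 1, 0 < v x)
    (hv_deriv : ∀ x ∈ Ioo (0:ℝ) 1, HasDerivAt v (v' x) x)
    (hv'_cont : ContinuousOn v' (Ioo 0 1))
    (hv'_bdd : ∃ M : ℝ, ∀ x ∈ Ioo (0:ℝ) 1, |v' x| ≤ M)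
    (winv : ℝ → ℝ)
    (hwinv : ∀ ρ ∈ Icc (0:ℝ) 1, IsLeast {x | x ∈ Icc (0:ℝ) 1 ∧ ρ ≤ w x} (winv ρ))
    (h : ℝ → ℝ)
    (hh : ∀ ρ, h ρ =
      (∫ x in Icc (winv ρ) 1, v x * w x) / (1 + ∫ x in Icc (winv ρ) 1, v x))
    (ρstar : ℝ) (hρstar : ρstar ∈ Icc (0:ℝ) 1) (hfix : h ρstar = ρstar) :
    ∃ C > 0, ∀ ρ ∈ Icc (0:ℝ) 1, h ρstar - h ρ ≤ C * (ρ - ρstar)^2 := by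
  obtain ⟨M, hM⟩ := hv'_bdd
  have hhalf : (1/2 : ℝ) ∈ Ioo (0:ℝ) 1 := by norm_num
  have hM0 : 0 ≤ M := (abs_nonneg _).trans (hM _ hhalf)
  set Mv : ℝ := v (1/2) + M with hMv_def
  have hv12 : 0 < v (1/2) := hv_pos _ (by norm_num)
  have hMv_pos : 0 < Mv := by simp only [hMv_def]; linarith
  -- bound for v on (0,1)
  have hv_le : ∀ x ∈ Ioo (0:ℝ) 1, v x ≤ Mv := by
    intro x hx
    have hlip := Convex.norm_image_sub_le_of_norm_hasDerivWithin_le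
      (f := v) (f' := v') (s := Ioo 0 1)
      (fun y hy => (hv_deriv y hy).hasDerivWithinAt)
      (fun y hy => by simpa [Real.norm_eq_abs] using hM y hy)
      (convex_Ioo 0 1) hhalf hx
    rw [Real.norm_eq_abs, Real.norm_eq_abs] at hlip
    have h2 : |x - 1/2| ≤ 1 := by
      rw [abs_le]; constructor <;> linarith [hx.1, hx.2]
    have h3 := le_abs_self (v x - v (1/2))
    have h4 : M * |x - 1/2| ≤ M * 1 := mul_le_mul_of_nonneg_left h2 hM0
    rw [hMv_def]
    linarith
  -- lower slope bound for w
  have hg_mono : MonotoneOn (fun x => w x - kw * x) (Icc (0:ℝ) 1) := by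
    apply monotoneOn_of_deriv_nonneg (convex_Icc 0 1)
    · exact hw_cont.sub (continuousOn_const.mul continuousOn_id)
    · intro x hx
      rw [interior_Icc] at hx
      have hd : HasDerivAt (fun y : ℝ => kw * y) kw x := by
        simpa using (hasDerivAt_id x).const_mul kw
      exact ((hw_deriv x hx).sub hd).differentiableAt.differentiableWithinAt
    · intro x hx
      rw [interior_Icc] at hx
      have hd : HasDerivAt (fun y : ℝ => kw * y) kw x := by
        simpa using (hasDerivAt_id x).const_mul kw
      have hderiv : deriv (fun y => w y - kw * y) x = w' x - kw :=
        ((hw_deriv x hx).sub hd).deriv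
      rw [hderiv]
      linarith [hkw_le x hx]
  have hslope : ∀ x ∈ Icc (0:ℝ) 1, ∀ y ∈ Icc (0:ℝ) 1, x ≤ y →
      kw * (y - x) ≤ w y - w x := by
    intro x hx y hy hxy
    have := hg_mono hx hy hxy
    simp only at this
    nlinarith
  -- basic properties of winv
  have hwinv_mem : ∀ ρ ∈ Icc (0:ℝ) 1, winv ρ ∈ Icc (0:ℝ) 1 := fun ρ hρ => (hwinv ρ hρ).1.1
  have hwinv_ge : ∀ ρ ∈ Icc (0:ℝ) 1, ρ ≤ w (winv ρ) := fun ρ hρ => (hwinv ρ hρ).1.2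
  have hwinv_lt : ∀ ρ ∈ Icc (0:ℝ) 1, ∀ x ∈ Icc (0:ℝ) 1, x < winv ρ → w x < ρ := by
    intro ρ hρ x hx hlt
    by_contra hcon
    push_neg at hcon
    exact absurd ((hwinv ρ hρ).2 ⟨hx, hcon⟩) (not_le.2 hlt)
  have hwinv_mono : ∀ ρ₁ ∈ Icc (0:ℝ) 1, ∀ ρ₂ ∈ Icc (0:ℝ) 1, ρ₁ ≤ ρ₂ → winv ρ₁ ≤ winv ρ₂ :=
    fun ρ₁ h1 ρ₂ h2 h12 => (hwinv ρ₁ h1).2 ⟨hwinv_mem ρ₂ h2, h12.trans (hwinv_ge ρ₂ h2)⟩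
  -- w (winv ρ) = ρ when winv ρ > 0
  have hw_eq : ∀ ρ ∈ Icc (0:ℝ) 1, 0 < winv ρ → w (winv ρ) = ρ := by
    intro ρ hρ hpos
    refine le_antisymm ?_ (hwinv_ge ρ hρ)
    have hb : winv ρ ∈ Icc (0:ℝ) 1 := hwinv_mem ρ hρ
    have hu_mem : ∀ n : ℕ, winv ρ * (1 - 1/((n:ℝ)+1)) ∈ Icc (0:ℝ) 1 := by
      intro n
      have h1 : (0:ℝ) < (n:ℝ)+1 := by positivity
      have h2 : 1/((n:ℝ)+1) ≤ 1 := by rw [div_le_one h1]; linarith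
      have h3 : (0:ℝ) ≤ 1 - 1/((n:ℝ)+1) := by linarith
      constructor
      · exact mul_nonneg hb.1 h3
      · have h4 : (0:ℝ) ≤ 1/((n:ℝ)+1) := by positivity
        have h5 := mul_le_mul_of_nonneg_right hb.2 h3
        linarith
    have hu_lt : ∀ n : ℕ, winv ρ * (1 - 1/((n:ℝ)+1)) < winv ρ := by
      intro n
      have h1 : (0:ℝ) < (n:ℝ)+1 := by positivity
      have h2 : (0:ℝ) < 1/((n:ℝ)+1) := by positivity
      nlinarith
    have htend : Filter.Tendsto (fun n : ℕ => winv ρ * (1 - 1/((n:ℝ)+1)))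
        Filter.atTop (nhds (winv ρ)) := by
      have h0 : Filter.Tendsto (fun n : ℕ => 1/((n:ℝ)+1)) Filter.atTop (nhds 0) :=
        tendsto_one_div_add_atTop_nhds_zero_nat
      have := (tendsto_const_nhds (x := winv ρ) (f := Filter.atTop (α := ℕ))).mul
        ((tendsto_const_nhds (x := (1:ℝ)) (f := Filter.atTop (α := ℕ))).sub h0)
      simpa using this
    have htendw : Filter.Tendsto (fun n : ℕ => w (winv ρ * (1 - 1/((n:ℝ)+1))))
        Filter.atTop (nhds (w (winv ρ))) := by
      apply ((hw_cont (winv ρ) hb).tendsto).comp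
      exact tendsto_nhdsWithin_of_tendsto_nhds_of_eventually_within _ htend
        (Filter.Eventually.of_forall hu_mem)
    exact le_of_tendsto htendw (Filter.Eventually.of_forall fun n =>
      (hwinv_lt ρ hρ _ (hu_mem n) (hu_lt n)).le)
  -- integrability of v * w on [0,1]
  have hw_meas : AEStronglyMeasurable w (volume.restrict (Icc (0:ℝ) 1)) :=
    hw_cont.aestronglyMeasurable measurableSet_Icc
  have hvw_int : IntegrableOn (fun x => v x * w x) (Icc (0:ℝ) 1) := by
    have h1 : IntegrableOn (fun x => w x * v x) (Icc (0:ℝ) 1) := by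
      apply Integrable.bdd_mul (c := 1) hv_int hw_meas
      refine (ae_restrict_iff' measurableSet_Icc).2 (Filter.Eventually.of_forall fun x hx => ?_)
      have := hw_range x hx
      rw [Real.norm_eq_abs, abs_le]
      exact ⟨by linarith [this.1], this.2⟩
    exact h1.congr (Filter.Eventually.of_forall fun x => mul_comm _ _)
  -- additivity of set integrals
  have hadd : ∀ f : ℝ → ℝ, IntegrableOn f (Icc (0:ℝ) 1) → ∀ b c : ℝ, 0 ≤ b → b ≤ c → c ≤ 1 →
      (∫ x in Icc b 1, f x) = (∫ x in Icc b c, f x) + ∫ x in Icc c 1, f x := by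
    intro f hf b c hb hbc hc1
    have h1 : IntegrableOn f (Icc b c) := hf.mono_set (Icc_subset_Icc hb (by linarith))
    have h2 : IntegrableOn f (Ioc c 1) :=
      hf.mono_set (Ioc_subset_Icc_self.trans (Icc_subset_Icc (by linarith) le_rfl))
    have hdisj : Disjoint (Icc b c) (Ioc c 1) :=
      Set.disjoint_left.2 fun x hx hx' => absurd hx.2 (not_le.2 hx'.1)
    have hu := setIntegral_union hdisj measurableSet_Ioc h1 h2
    rw [Icc_union_Ioc_eq_Icc hbc hc1] at hu
    rw [hu, show (∫ x in Icc c 1, f x) = ∫ x in Ioc c 1, f x from integral_Icc_eq_integral_Ioc]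
  -- bound for integrals of functions bounded on the open interval
  have key : ∀ b c : ℝ, b ≤ c → ∀ f : ℝ → ℝ, IntegrableOn f (Icc b c) →
      ∀ K : ℝ, (∀ x ∈ Ioo b c, 0 ≤ f x ∧ f x ≤ K) →
      0 ≤ (∫ x in Icc b c, f x) ∧ (∫ x in Icc b c, f x) ≤ K * (c - b) := by
    intro b c hbc f hf K hbound
    rw [integral_Icc_eq_integral_Ioo]
    have hf' : IntegrableOn f (Ioo b c) := hf.mono_set Ioo_subset_Icc_self
    constructor
    · exact setIntegral_nonneg measurableSet_Ioo fun x hx => (hbound x hx).1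
    · have hconst : IntegrableOn (fun _ => K) (Ioo b c) :=
        (integrableOn_const_iff (C := K)).2 (Or.inr measure_Ioo_lt_top)
      calc (∫ x in Ioo b c, f x) ≤ ∫ _ in Ioo b c, K :=
            setIntegral_mono_on hf' hconst measurableSet_Ioo fun x hx => (hbound x hx).2
        _ = K * (c - b) := by
            rw [setIntegral_const, Real.volume_real_Ioo_of_le hbc]
            rw [smul_eq_mul, mul_comm]
  have hdivring : ∀ m k t : ℝ, k ≠ 0 → m * t * (t / k) = m / k * t ^ 2 := by
    intro m k t hk; field_simp
  -- the constant
  refine ⟨Mv / kw + 1, by positivity, ?_⟩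
  intro ρ hρ
  set a := winv ρ with ha_def
  set b := winv ρstar with hb_def
  have haI : a ∈ Icc (0:ℝ) 1 := hwinv_mem ρ hρ
  have hbI : b ∈ Icc (0:ℝ) 1 := hwinv_mem ρstar hρstar
  rcases le_total ρstar ρ with hle | hle
  · -- case ρstar ≤ ρ
    have hba : b ≤ a := hwinv_mono ρstar hρstar ρ hρ hle
    set J := ∫ x in Icc b a, v x * w x with hJ_def
    set I := ∫ x in Icc b a, v x with hI_def
    set Na := ∫ x in Icc a 1, v x * w x with hNa_def
    set Da := ∫ x in Icc a 1, v x with hDa_def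
    have hNsplit : (∫ x in Icc b 1, v x * w x) = J + Na := hadd _ hvw_int b a hbI.1 hba haI.2
    have hDsplit : (∫ x in Icc b 1, v x) = I + Da := hadd _ hv_int b a hbI.1 hba haI.2
    have hDa0 : 0 ≤ Da := setIntegral_nonneg measurableSet_Icc fun x hx =>
      (hv_pos x ⟨le_trans haI.1 hx.1, hx.2⟩).le
    have hI0 : 0 ≤ I := setIntegral_nonneg measurableSet_Icc fun x hx =>
      (hv_pos x ⟨le_trans hbI.1 hx.1, le_trans hx.2 haI.2⟩).le
    have hpos : (0:ℝ) < 1 + Da := by linarith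
    have h2 : ρstar = (J + Na) / (1 + (I + Da)) := by
      rw [← hfix, hh ρstar, ← hb_def, hNsplit, hDsplit]
    have hpos2 : (0:ℝ) < 1 + (I + Da) := by linarith
    have hfix' : ρstar * (1 + (I + Da)) = J + Na := (eq_div_iff hpos2.ne').1 h2
    have hhρ : h ρ = Na / (1 + Da) := hh ρ
    have hval : h ρstar - h ρ = (J - ρstar * I) / (1 + Da) := by
      rw [hfix, hhρ, eq_div_iff hpos.ne', sub_mul, div_mul_cancel₀ _ hpos.ne']
      linarith
    -- numerator as a single integral
    have hJint : IntegrableOn (fun x => v x * w x) (Icc b a) :=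
      hvw_int.mono_set (Icc_subset_Icc hbI.1 haI.2)
    have hIint : IntegrableOn v (Icc b a) := hv_int.mono_set (Icc_subset_Icc hbI.1 haI.2)
    have hnum : (∫ x in Icc b a, (v x * w x - ρstar * v x)) = J - ρstar * I := by
      rw [integral_sub hJint (hIint.const_mul ρstar), integral_const_mul]
    have hbound : ∀ x ∈ Ioo b a, 0 ≤ v x * w x - ρstar * v x ∧
        v x * w x - ρstar * v x ≤ Mv * (ρ - ρstar) := by
      intro x hx
      have hxI : x ∈ Icc (0:ℝ) 1 := ⟨le_trans hbI.1 hx.1.le, le_trans hx.2.le haI.2⟩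
      have hx01 : x ∈ Ioo (0:ℝ) 1 :=
        ⟨lt_of_le_of_lt hbI.1 hx.1, lt_of_lt_of_le hx.2 haI.2⟩
      have hvx : 0 < v x := hv_pos x hxI
      have hvxM : v x ≤ Mv := hv_le x hx01
      have hwx_ge : ρstar ≤ w x :=
        le_trans (hwinv_ge ρstar hρstar) (hw_mono.monotoneOn hbI hxI hx.1.le)
      have hwx_le : w x ≤ ρ := (hwinv_lt ρ hρ x hxI hx.2).le
      constructor
      · nlinarith [mul_nonneg hvx.le (sub_nonneg.2 hwx_ge)]
      · nlinarith [mul_le_mul hvxM (show w x - ρstar ≤ ρ - ρstar by linarith)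
          (by linarith) hMv_pos.le]
    have hkey := key b a hba (fun x => v x * w x - ρstar * v x) (hJint.sub (hIint.const_mul ρstar)) (Mv * (ρ - ρstar)) hbound
    rw [hnum] at hkey
    have hslope' : kw * (a - b) ≤ ρ - ρstar := by
      rcases eq_or_lt_of_le hba with heq | hlt
      · rw [← heq, sub_self, mul_zero]; linarith
      · have ha_pos : 0 < a := lt_of_le_of_lt hbI.1 hlt
        have hwa : w a = ρ := hw_eq ρ hρ ha_pos
        have hs := hslope b hbI a haI hba
        have hwb : ρstar ≤ w b := hwinv_ge ρstar hρstar
        linarith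
    have h1 : h ρstar - h ρ ≤ J - ρstar * I := by
      rw [hval]; exact div_le_self hkey.1 (by linarith)
    have hρd : 0 ≤ ρ - ρstar := by linarith
    have hab : a - b ≤ (ρ - ρstar) / kw := by
      rw [le_div_iff₀ hkw]; linarith
    calc h ρstar - h ρ ≤ J - ρstar * I := h1
      _ ≤ Mv * (ρ - ρstar) * (a - b) := hkey.2
      _ ≤ Mv * (ρ - ρstar) * ((ρ - ρstar) / kw) := by
          exact mul_le_mul_of_nonneg_left hab (mul_nonneg hMv_pos.le hρd)
      _ = Mv / kw * (ρ - ρstar) ^ 2 := hdivring Mv kw (ρ - ρstar) hkw.ne'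
      _ ≤ (Mv / kw + 1) * (ρ - ρstar) ^ 2 := by nlinarith [sq_nonneg (ρ - ρstar)]
  · -- case ρ ≤ ρstar
    have hab : a ≤ b := hwinv_mono ρ hρ ρstar hρstar hle
    set J := ∫ x in Icc a b, v x * w x with hJ_def
    set I := ∫ x in Icc a b, v x with hI_def
    set Nb := ∫ x in Icc b 1, v x * w x with hNb_def
    set Db := ∫ x in Icc b 1, v x with hDb_def
    have hNsplit : (∫ x in Icc a 1, v x * w x) = J + Nb := hadd _ hvw_int a b haI.1 hab hbI.2
    have hDsplit : (∫ x in Icc a 1, v x) = I + Db := hadd _ hv_int a b haI.1 hab hbI.2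
    have hDb0 : 0 ≤ Db := setIntegral_nonneg measurableSet_Icc fun x hx =>
      (hv_pos x ⟨le_trans hbI.1 hx.1, hx.2⟩).le
    have hI0 : 0 ≤ I := setIntegral_nonneg measurableSet_Icc fun x hx =>
      (hv_pos x ⟨le_trans haI.1 hx.1, le_trans hx.2 hbI.2⟩).le
    have hpos : (0:ℝ) < 1 + Db := by linarith
    have hpos2 : (0:ℝ) < 1 + (I + Db) := by linarith
    have h2 : ρstar = Nb / (1 + Db) := by rw [← hfix, hh ρstar]
    have hfix' : ρstar * (1 + Db) = Nb := (eq_div_iff hpos.ne').1 h2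
    have hhρ : h ρ = (J + Nb) / (1 + (I + Db)) := by
      rw [hh ρ, ← ha_def, hNsplit, hDsplit]
    have hval : h ρstar - h ρ = (ρstar * I - J) / (1 + (I + Db)) := by
      rw [hfix, hhρ, eq_div_iff hpos2.ne', sub_mul, div_mul_cancel₀ _ hpos2.ne']
      linarith
    have hJint : IntegrableOn (fun x => v x * w x) (Icc a b) :=
      hvw_int.mono_set (Icc_subset_Icc haI.1 hbI.2)
    have hIint : IntegrableOn v (Icc a b) := hv_int.mono_set (Icc_subset_Icc haI.1 hbI.2)
    have hnum : (∫ x in Icc a b, (ρstar * v x - v x * w x)) = ρstar * I - J := by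
      rw [integral_sub (hIint.const_mul ρstar) hJint, integral_const_mul]
    have hbound : ∀ x ∈ Ioo a b, 0 ≤ ρstar * v x - v x * w x ∧
        ρstar * v x - v x * w x ≤ Mv * (ρstar - ρ) := by
      intro x hx
      have hxI : x ∈ Icc (0:ℝ) 1 := ⟨le_trans haI.1 hx.1.le, le_trans hx.2.le hbI.2⟩
      have hx01 : x ∈ Ioo (0:ℝ) 1 :=
        ⟨lt_of_le_of_lt haI.1 hx.1, lt_of_lt_of_le hx.2 hbI.2⟩
      have hvx : 0 < v x := hv_pos x hxI
      have hvxM : v x ≤ Mv := hv_le x hx01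
      have hwx_ge : ρ ≤ w x :=
        le_trans (hwinv_ge ρ hρ) (hw_mono.monotoneOn haI hxI hx.1.le)
      have hwx_le : w x ≤ ρstar := (hwinv_lt ρstar hρstar x hxI hx.2).le
      constructor
      · nlinarith [mul_nonneg hvx.le (sub_nonneg.2 hwx_le)]
      · nlinarith [mul_le_mul hvxM (show ρstar - w x ≤ ρstar - ρ by linarith)
          (by linarith) hMv_pos.le]
    have hkey := key a b hab (fun x => ρstar * v x - v x * w x) ((hIint.const_mul ρstar).sub hJint) (Mv * (ρstar - ρ)) hbound
    rw [hnum] at hkey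
    have hslope' : kw * (b - a) ≤ ρstar - ρ := by
      rcases eq_or_lt_of_le hab with heq | hlt
      · rw [heq, sub_self, mul_zero]; linarith
      · have hb_pos : 0 < b := lt_of_le_of_lt haI.1 hlt
        have hwb : w b = ρstar := hw_eq ρstar hρstar hb_pos
        have hs := hslope a haI b hbI hab
        have hwa : ρ ≤ w a := hwinv_ge ρ hρ
        linarith
    have h1 : h ρstar - h ρ ≤ ρstar * I - J := by
      rw [hval]; exact div_le_self hkey.1 (by linarith)
    have hρd : 0 ≤ ρstar - ρ := by linarith
    have hba' : b - a ≤ (ρstar - ρ) / kw := by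
      rw [le_div_iff₀ hkw]; linarith
    calc h ρstar - h ρ ≤ ρstar * I - J := h1
      _ ≤ Mv * (ρstar - ρ) * (b - a) := hkey.2
      _ ≤ Mv * (ρstar - ρ) * ((ρstar - ρ) / kw) := by
          exact mul_le_mul_of_nonneg_left hba' (mul_nonneg hMv_pos.le hρd)
      _ = Mv / kw * (ρstar - ρ) ^ 2 := hdivring Mv kw (ρstar - ρ) hkw.ne'
      _ = Mv / kw * (ρ - ρstar) ^ 2 := by ring
      _ ≤ (Mv / kw + 1) * (ρ - ρstar) ^ 2 := by nlinarith [sq_nonneg (ρ - ρstar)]
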